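/- (Sandwich property of scaled rare sets) Let A ⊆ ℝ^d be open, increasing, with convex complement and 0 ∉ Ā (i.e., A ∈ 𝓡). Then for any fixed c ∈ [0,∞)^d and all sufficiently large x, there exists u ∈ (0, x) such that (x+u)A ⊆ xA + c ⊆ (x−u)A, where xA + c = {xa + c : a ∈ A}. -/

import Mathlib

open Filter Topology Pointwise

/-- Key absorption lemma: if `Aᶜ` is convex and contains the ball of radius `ε`
around `0`, then for `a ∈ A` and `lam > 1`, every point within `(lam-1)*ε` of
`lam • a` lies in `A`. -/
theorem rare_set_key (d : ℕ) (A : Set (Fin d → ℝ)) (hconv : Convex ℝ Aᶜ)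
    (ε : ℝ) (hε : 0 < ε) (hball : ∀ z : Fin d → ℝ, ‖z‖ < ε → z ∉ A)
    (a : Fin d → ℝ) (ha : a ∈ A) (lam : ℝ) (hlam : 1 < lam)
    (b : Fin d → ℝ) (hb : ‖b - lam • a‖ < (lam - 1) * ε) : b ∈ A := by
  by_contra hbA
  have hlam1 : (0:ℝ) < lam - 1 := by linarith
  have hlam0 : (0:ℝ) < lam := by linarith
  set z : Fin d → ℝ := (lam - 1)⁻¹ • (lam • a - b) with hz
  have hzn : ‖z‖ < ε := by
    rw [hz, norm_smul, Real.norm_eq_abs, abs_inv, abs_of_pos hlam1,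
      ← norm_neg, neg_sub]
    rw [inv_mul_lt_iff₀ hlam1]
    linarith [hb]
  have hzA : z ∈ Aᶜ := hball z hzn
  have hcomb := hconv hbA hzA (by positivity : (0:ℝ) ≤ lam⁻¹)
    (by
      have : lam⁻¹ ≤ 1 := by
        rw [inv_le_one_iff₀]; right; linarith
      linarith : (0:ℝ) ≤ 1 - lam⁻¹)
    (by ring)
  have heq : lam⁻¹ • b + (1 - lam⁻¹) • z = a := by
    rw [hz]
    have h1 : lam ≠ 0 := ne_of_gt hlam0
    have h2 : lam - 1 ≠ 0 := ne_of_gt hlam1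
    match_scalars <;> field_simp <;> ring
  rw [heq] at hcomb
  exact hcomb ha

theorem rare_set_sandwich (d : ℕ) (A : Set (Fin d → ℝ)) (hopen : IsOpen A)
    (hinc : ∀ a ∈ A, ∀ y : Fin d → ℝ, (∀ k, 0 ≤ y k) → a + y ∈ A)
    (hconv : Convex ℝ Aᶜ) (h0 : (0 : Fin d → ℝ) ∉ closure A) :
    ∀ c : Fin d → ℝ, (∀ k, 0 ≤ c k) →
      ∀ᶠ x : ℝ in atTop, ∃ u ∈ Set.Ioo (0 : ℝ) x,
        (x + u) • A ⊆ (x • A) + ({c} : Set (Fin d → ℝ)) ∧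
          (x • A) + ({c} : Set (Fin d → ℝ)) ⊆ (x - u) • A := by
  intro c _hc
  -- obtain a ball around 0 disjoint from A
  have hopen' : IsOpen (closure A)ᶜ := isOpen_compl_iff.mpr isClosed_closure
  obtain ⟨ε, hε, hball'⟩ := Metric.isOpen_iff.mp hopen' 0 h0
  have hball : ∀ z : Fin d → ℝ, ‖z‖ < ε → z ∉ A := by
    intro z hzn hzA
    have : z ∈ Metric.ball (0 : Fin d → ℝ) ε := by
      simpa [Metric.mem_ball, dist_zero_right] using hzn
    exact hball' this (subset_closure hzA)
  set u : ℝ := ‖c‖ / ε + 1 with hu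
  have hu0 : 0 < u := by positivity
  have hcu : ‖c‖ < u * ε := by
    have : u * ε = ‖c‖ + ε := by
      rw [hu, add_mul, div_mul_cancel₀ _ (ne_of_gt hε), one_mul]
    rw [this]; linarith
  filter_upwards [eventually_gt_atTop (u + 1)] with x hx
  have hxu : u < x := by linarith
  have hx0 : (0:ℝ) < x := by linarith
  have hxu0 : (0:ℝ) < x - u := by linarith
  refine ⟨u, ⟨hu0, hxu⟩, ?_, ?_⟩
  · -- (x+u) • A ⊆ x • A + {c}
    rintro y ⟨a, ha, rfl⟩
    set lam : ℝ := (x + u) / x with hlam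
    have hlam1 : 1 < lam := by
      rw [hlam, lt_div_iff₀ hx0]; linarith
    set b : Fin d → ℝ := lam • a - x⁻¹ • c with hb
    have hbA : b ∈ A := by
      refine rare_set_key d A hconv ε hε hball a ha lam hlam1 b ?_
      have h1 : b - lam • a = -(x⁻¹ • c) := by rw [hb]; abel
      rw [h1, norm_neg, norm_smul, Real.norm_eq_abs, abs_inv, abs_of_pos hx0]
      have h2 : lam - 1 = u / x := by rw [hlam]; field_simp; ring
      rw [h2, div_mul_eq_mul_div, lt_div_iff₀ hx0, inv_mul_eq_div,
        div_mul_eq_mul_div, div_lt_iff₀ hx0]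
      nlinarith [hcu]
    refine Set.mem_add.mpr ⟨x • b, ⟨b, hbA, rfl⟩, c, rfl, ?_⟩
    rw [hb, hlam]
    have h1 : x ≠ 0 := ne_of_gt hx0
    match_scalars <;> field_simp <;> ring
  · -- x • A + {c} ⊆ (x - u) • A
    rintro y hy
    obtain ⟨w, ⟨a, ha, rfl⟩, c', hc', rfl⟩ := Set.mem_add.mp hy
    have hc'' : c' = c := hc'
    rw [hc'']
    set lam : ℝ := x / (x - u) with hlam
    have hlam1 : 1 < lam := by
      rw [hlam, lt_div_iff₀ hxu0]; linarith
    set b : Fin d → ℝ := (x - u)⁻¹ • (x • a + c) with hb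
    have hbA : b ∈ A := by
      refine rare_set_key d A hconv ε hε hball a ha lam hlam1 b ?_
      have h1 : b - lam • a = (x - u)⁻¹ • c := by
        rw [hb, hlam]
        have h2 : x - u ≠ 0 := ne_of_gt hxu0
        match_scalars <;> field_simp <;> ring
      rw [h1, norm_smul, Real.norm_eq_abs, abs_inv, abs_of_pos hxu0]
      have h2 : lam - 1 = u / (x - u) := by rw [hlam]; field_simp; ring
      rw [h2, div_mul_eq_mul_div, inv_mul_eq_div, div_lt_div_iff₀ hxu0 hxu0]
      nlinarith [hcu]
    refine ⟨b, hbA, ?_⟩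
    show (x - u) • b = x • a + c
    rw [hb]
    have h2 : x - u ≠ 0 := ne_of_gt hxu0
    rw [smul_smul, mul_inv_cancel₀ h2, one_smul]
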